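/- Let Z = {(x_i, y_i)}_{i=1}^N ⊂ ℝ^d × {−1,+1} be a binary dataset with separability decomposition Z = S^LS ⊔ S^SC, and let L be the logistic risk on Z. If v ∈ ℝ^d is an optimal direction for L, then ⟨v, x⟩ = 0 for every x in the span of the features of S^SC, and y_i⟨v, x_i⟩ > 0 for every (x_i, y_i) ∈ S^LS. -/

import Mathlib

open Filter

namespace SGDBN4

/-- Euclidean inner product on `Fin d → ℝ`. -/
noncomputable def dot {d : ℕ} (u v : Fin d → ℝ) : ℝ := ∑ k, u k * v k

/-- Logistic risk of the linear classifier `v` on the dataset `(x, y)`. -/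
noncomputable def logisticRisk {d N : ℕ} (x : Fin N → Fin d → ℝ) (y : Fin N → ℝ)
    (v : Fin d → ℝ) : ℝ :=
  ∑ i, Real.log (1 + Real.exp (-(y i * dot v (x i))))

/-- The (index set of the) maximal linearly separable subset `S^LS`. -/
def LSset {d N : ℕ} (x : Fin N → Fin d → ℝ) (y : Fin N → ℝ) : Set (Fin N) :=
  {i | ∃ u : Fin d → ℝ, 0 < y i * dot u (x i) ∧ ∀ j, 0 ≤ y j * dot u (x j)}

/-- `v` is an optimal direction for the logistic risk: for some `u`,
`L(u + t v) → inf_w L(w)` as `t → ∞`. -/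
def OptimalDirection {d N : ℕ} (x : Fin N → Fin d → ℝ) (y : Fin N → ℝ)
    (v : Fin d → ℝ) : Prop :=
  ∃ u : Fin d → ℝ,
    Tendsto (fun t : ℝ => logisticRisk x y (u + t • v)) atTop
      (nhds (⨅ w : Fin d → ℝ, logisticRisk x y w))

noncomputable def ell (s : ℝ) : ℝ := Real.log (1 + Real.exp (-s))

lemma ell_pos (s : ℝ) : 0 < ell s :=
  Real.log_pos (by nlinarith [Real.exp_pos (-s)])

lemma dot_add_left {d : ℕ} (a b w : Fin d → ℝ) : dot (a + b) w = dot a w + dot b w := by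
  simp [dot, add_mul, Finset.sum_add_distrib]

lemma dot_smul_left {d : ℕ} (t : ℝ) (a w : Fin d → ℝ) : dot (t • a) w = t * dot a w := by
  simp [dot, Finset.mul_sum, mul_assoc]

lemma dot_sum_left {d : ℕ} {ι : Type*} (s : Finset ι) (g : ι → Fin d → ℝ) (w : Fin d → ℝ) :
    dot (∑ i ∈ s, g i) w = ∑ i ∈ s, dot (g i) w := by
  simp only [dot, Finset.sum_apply, Finset.sum_mul]
  exact Finset.sum_comm

lemma dot_add_right {d : ℕ} (w a b : Fin d → ℝ) : dot w (a + b) = dot w a + dot w b := by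
  simp [dot, mul_add, Finset.sum_add_distrib]

lemma dot_smul_right {d : ℕ} (t : ℝ) (w a : Fin d → ℝ) : dot w (t • a) = t * dot w a := by
  simp only [dot, Pi.smul_apply, smul_eq_mul, Finset.mul_sum]
  exact Finset.sum_congr rfl fun k _ => by ring

lemma dot_zero_right {d : ℕ} (w : Fin d → ℝ) : dot w 0 = 0 := by simp [dot]

lemma ell_tendsto_zero (a m : ℝ) (hm : 0 < m) :
    Tendsto (fun s : ℝ => ell (a + s * m)) atTop (nhds 0) := by
  have h1 : Tendsto (fun s : ℝ => a + s * m) atTop atTop :=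
    tendsto_atTop_add_const_left _ a (Tendsto.atTop_mul_const hm tendsto_id)
  have h2 : Tendsto (fun s : ℝ => Real.exp (-(a + s * m))) atTop (nhds 0) :=
    Real.tendsto_exp_atBot.comp (tendsto_neg_atBot_iff.mpr h1)
  have h3 : Tendsto (fun s : ℝ => 1 + Real.exp (-(a + s * m))) atTop (nhds 1) := by
    simpa using tendsto_const_nhds.add h2
  have h4 := ((Real.continuousAt_log (by norm_num : (1:ℝ) ≠ 0)).tendsto).comp h3
  simpa [ell, Function.comp_def] using h4

lemma ell_tendsto_top (a m : ℝ) (hm : m < 0) :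
    Tendsto (fun s : ℝ => ell (a + s * m)) atTop atTop := by
  have h1 : Tendsto (fun s : ℝ => -(a + s * m)) atTop atTop := by
    have h : Tendsto (fun s : ℝ => -(s * m)) atTop atTop :=
      tendsto_neg_atBot_atTop.comp (Tendsto.atTop_mul_const_of_neg hm tendsto_id)
    have := tendsto_atTop_add_const_right _ (-a) h
    refine this.congr fun s => by ring
  have h2 : Tendsto (fun s : ℝ => 1 + Real.exp (-(a + s * m))) atTop atTop :=
    tendsto_atTop_add_const_left _ 1 (Real.tendsto_exp_atTop.comp h1)
  exact Real.tendsto_log_atTop.comp h2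

lemma exists_sep {d N : ℕ} (x : Fin N → Fin d → ℝ) (y : Fin N → ℝ) :
    ∃ u₀ : Fin d → ℝ, (∀ j, 0 ≤ y j * dot u₀ (x j)) ∧
      (∀ i ∈ LSset x y, 0 < y i * dot u₀ (x i)) := by
  classical
  choose! g hg1 hg2 using fun i (h : i ∈ LSset x y) => h
  set F : Finset (Fin N) := Finset.univ.filter (fun i => i ∈ LSset x y) with hF
  refine ⟨∑ i ∈ F, g i, ?_, ?_⟩
  · intro j
    rw [dot_sum_left, Finset.mul_sum]
    refine Finset.sum_nonneg fun i hi => ?_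
    exact hg2 i (by simpa [hF] using hi) j
  · intro i hi
    rw [dot_sum_left, Finset.mul_sum]
    refine Finset.sum_pos' (fun k hk => hg2 k (by simpa [hF] using hk) i) ?_
    exact ⟨i, by simpa [hF] using hi, hg1 i hi⟩

/-- If `v` is an optimal direction for the logistic risk of a binary
dataset, then `v` is orthogonal to the span of the `S^SC` features, and strictly separates
every point of `S^LS`. -/
theorem statement4 (d N : ℕ) (x : Fin N → Fin d → ℝ) (y : Fin N → ℝ)
    (hy : ∀ i, y i = 1 ∨ y i = -1) (v : Fin d → ℝ)
    (hv : OptimalDirection x y v) :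
    (∀ w ∈ Submodule.span ℝ {w : Fin d → ℝ | ∃ i, i ∉ LSset x y ∧ w = x i}, dot v w = 0) ∧
    (∀ i ∈ LSset x y, 0 < y i * dot v (x i)) := by
  classical
  obtain ⟨u, hu⟩ := hv
  set Lstar : ℝ := ⨅ w : Fin d → ℝ, logisticRisk x y w with hLstar
  have hrisk : ∀ w : Fin d → ℝ, logisticRisk x y w = ∑ i, ell (y i * dot w (x i)) :=
    fun w => rfl
  have hbdd : BddBelow (Set.range (logisticRisk x y)) := by
    refine ⟨0, ?_⟩
    rintro r ⟨w, rfl⟩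
    exact Finset.sum_nonneg fun i _ => (ell_pos _).le
  have hmar : ∀ (w w' : Fin d → ℝ) (t : ℝ) (i : Fin N),
      y i * dot (w + t • w') (x i) = y i * dot w (x i) + t * (y i * dot w' (x i)) := by
    intro w w' t i
    rw [dot_add_left, dot_smul_left]; ring
  obtain ⟨u₀, hu₀1, hu₀2⟩ := exists_sep x y
  set S : Finset (Fin N) := Finset.univ.filter (fun i => i ∉ LSset x y) with hS
  set LSC : ℝ := ∑ i ∈ S, ell (y i * dot u (x i)) with hLSC
  have hu₀3 : ∀ j, j ∉ LSset x y → y j * dot u₀ (x j) = 0 := by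
    intro j hj
    by_contra h
    exact hj ⟨u₀, lt_of_le_of_ne (hu₀1 j) (Ne.symm h), hu₀1⟩
  have hsplit : ∀ w : Fin d → ℝ, logisticRisk x y w =
      (∑ i ∈ Finset.univ.filter (fun i => i ∈ LSset x y), ell (y i * dot w (x i)))
        + ∑ i ∈ S, ell (y i * dot w (x i)) := by
    intro w
    rw [hrisk, hS]
    exact (Finset.sum_filter_add_sum_filter_not Finset.univ _ _).symm
  -- Step 1 : Lstar ≤ LSC
  have step1 : Lstar ≤ LSC := by
    have hT : Tendsto (fun s : ℝ => ∑ i ∈ Finset.univ.filter (fun i => i ∈ LSset x y),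
        ell (y i * dot (u + s • u₀) (x i))) atTop (nhds 0) := by
      have h0 : Tendsto (fun s : ℝ => ∑ i ∈ Finset.univ.filter (fun i => i ∈ LSset x y),
          ell (y i * dot u (x i) + s * (y i * dot u₀ (x i)))) atTop
          (nhds (∑ _i ∈ Finset.univ.filter (fun i => i ∈ LSset x y), (0:ℝ))) := by
        refine tendsto_finset_sum _ fun i hi => ?_
        exact ell_tendsto_zero _ _ (hu₀2 i (by simpa using hi))
      simp only [Finset.sum_const, smul_zero] at h0
      exact h0.congr fun s => by
        refine Finset.sum_congr rfl fun i _ => by rw [hmar]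
    have hSconst : ∀ s : ℝ, ∑ i ∈ S, ell (y i * dot (u + s • u₀) (x i)) = LSC := by
      intro s
      refine Finset.sum_congr rfl fun i hi => ?_
      rw [hmar, hu₀3 i (by simpa [hS] using hi), mul_zero, add_zero]
    have hlim : Tendsto (fun s : ℝ => logisticRisk x y (u + s • u₀)) atTop (nhds LSC) := by
      have := hT.add (tendsto_const_nhds (x := LSC) (f := atTop))
      rw [zero_add] at this
      exact this.congr fun s => by rw [hsplit, hSconst]
    exact ge_of_tendsto' hlim fun s => ciInf_le hbdd _
  -- Step 2 : all margins of v are nonnegative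
  have hnn : ∀ i, 0 ≤ y i * dot v (x i) := by
    intro i
    by_contra h
    push_neg at h
    have hbig : Tendsto (fun t : ℝ => logisticRisk x y (u + t • v)) atTop atTop := by
      refine tendsto_atTop_mono ?_ (ell_tendsto_top (y i * dot u (x i)) _ h)
      intro t
      rw [hrisk, ← hmar]
      exact Finset.single_le_sum (f := fun j => ell (y j * dot (u + t • v) (x j)))
        (fun j _ => (ell_pos _).le) (Finset.mem_univ i)
    exact not_tendsto_atTop_of_tendsto_nhds hu hbig
  have hzero : ∀ i, i ∉ LSset x y → y i * dot v (x i) = 0 := by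
    intro i hi
    by_contra h
    exact hi ⟨v, lt_of_le_of_ne (hnn i) (Ne.symm h), hnn⟩
  constructor
  · intro w hw
    induction hw using Submodule.span_induction with
    | mem w hw =>
        obtain ⟨i, hi, rfl⟩ := hw
        have h := hzero i hi
        rcases mul_eq_zero.mp h with h' | h'
        · exact absurd h' (by rcases hy i with h1 | h1 <;> simp [h1])
        · exact h'
    | zero => exact dot_zero_right v
    | add a b _ _ ha hb => rw [dot_add_right, ha, hb, add_zero]
    | smul t a _ ha => rw [dot_smul_right, ha, mul_zero]
  · intro i hi
    rcases lt_or_eq_of_le (hnn i) with h | h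
    · exact h
    exfalso
    have hiS : i ∉ S := by simp [hS, hi]
    have hconst : ∀ t : ℝ, ell (y i * dot u (x i)) + LSC ≤ logisticRisk x y (u + t • v) := by
      intro t
      rw [hrisk]
      have h1 : ∑ j ∈ insert i S, ell (y j * dot (u + t • v) (x j))
          ≤ ∑ j, ell (y j * dot (u + t • v) (x j)) :=
        Finset.sum_le_sum_of_subset_of_nonneg (Finset.subset_univ _)
          (fun j _ _ => (ell_pos _).le)
      rw [Finset.sum_insert hiS] at h1
      have e1 : ∀ j, y j * dot v (x j) = 0 →
          ell (y j * dot (u + t • v) (x j)) = ell (y j * dot u (x j)) := by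
        intro j hj
        rw [hmar, hj, mul_zero, add_zero]
      have e2 : ∑ j ∈ S, ell (y j * dot (u + t • v) (x j)) = LSC := by
        refine Finset.sum_congr rfl fun j hj => e1 j (hzero j (by simpa [hS] using hj))
      rw [e1 i h.symm, e2] at h1
      exact h1
    have hge : ell (y i * dot u (x i)) + LSC ≤ Lstar := ge_of_tendsto' hu hconst
    linarith [ell_pos (y i * dot u (x i))]

end SGDBN4
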